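/- Let N ≥ 1 and for each r ∈ {1,…,N} let μ_r be a finitely supported probability measure on ℝ, given by a probability vector a^r ∈ ℝ^{n_r} and points x^r : {1,…,n_r} → ℝ. For r, s ∈ {1,…,N} let W₁(r,s) denote the infimum over P ∈ U(a^r, a^s) of ∑_{i,j} P_{ij} |x^r_i − x^s_j|. Then W₁ is conditionally negative definite: for all c ∈ ℝ^N with ∑_{r=1}^N c_r = 0, one has ∑_{r=1}^N ∑_{s=1}^N c_r c_s W₁(r,s) ≤ 0. -/

import Mathlib

open Finset

/-- A probability vector: nonnegative entries summing to 1. -/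
def IsProbVec {n : ℕ} (a : Fin n → ℝ) : Prop :=
  (∀ i, 0 ≤ a i) ∧ ∑ i, a i = 1

/-- The transportation polytope `U(a,b)`. -/
def transportPolytope {n m : ℕ} (a : Fin n → ℝ) (b : Fin m → ℝ) :
    Set (Fin n → Fin m → ℝ) :=
  {P | (∀ i j, 0 ≤ P i j) ∧ (∀ i, ∑ j, P i j = a i) ∧ (∀ j, ∑ i, P i j = b j)}

noncomputable def ind (p : Prop) [Decidable p] : ℝ := if p then 1 else 0

lemma ind_nonneg (p : Prop) [Decidable p] : 0 ≤ ind p := by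
  unfold ind; split_ifs <;> norm_num

lemma ind_congr {p q : Prop} [Decidable p] [Decidable q] (h : p ↔ q) : ind p = ind q := by
  unfold ind; split_ifs with h1 h2 <;> tauto

lemma abs_ind_sub (p q : Prop) [Decidable p] [Decidable q] :
    |ind p - ind q| = ind p + ind q - 2 * (ind p * ind q) := by
  unfold ind; split_ifs <;> norm_num

noncomputable def cum (a : ℕ → ℝ) (p : ℕ) : ℝ := ∑ i ∈ range p, a i

lemma cum_zero (a : ℕ → ℝ) : cum a 0 = 0 := by simp [cum]

lemma cum_succ (a : ℕ → ℝ) (p : ℕ) : cum a (p+1) = cum a p + a p := sum_range_succ _ _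

lemma cum_nonneg {a : ℕ → ℝ} (ha : ∀ i, 0 ≤ a i) (p : ℕ) : 0 ≤ cum a p :=
  sum_nonneg fun i _ => ha i

lemma cum_mono {a : ℕ → ℝ} (ha : ∀ i, 0 ≤ a i) {p q : ℕ} (h : p ≤ q) : cum a p ≤ cum a q :=
  sum_le_sum_of_subset_of_nonneg (range_subset_range.mpr h) (fun i _ _ => ha i)

lemma min_super {x X y Y : ℝ} (hx : x ≤ X) (hy : y ≤ Y) :
    min X y + min x Y ≤ min X Y + min x y := by
  simp only [min_def]; split_ifs <;> linarith

noncomputable def NWP (a b : ℕ → ℝ) (i j : ℕ) : ℝ :=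
  min (cum a (i+1)) (cum b (j+1)) - min (cum a (i+1)) (cum b j)
    - min (cum a i) (cum b (j+1)) + min (cum a i) (cum b j)

lemma NWP_nonneg {a b : ℕ → ℝ} (ha : ∀ i, 0 ≤ a i) (hb : ∀ j, 0 ≤ b j) (i j : ℕ) :
    0 ≤ NWP a b i j := by
  have h1 : cum a i ≤ cum a (i+1) := cum_mono ha (Nat.le_succ _)
  have h2 : cum b j ≤ cum b (j+1) := cum_mono hb (Nat.le_succ _)
  have := min_super h1 h2
  unfold NWP; linarith

lemma NWP_inner {a b : ℕ → ℝ} (ha : ∀ i, 0 ≤ a i) (hb : ∀ j, 0 ≤ b j) (i q : ℕ) :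
    ∑ j ∈ range q, NWP a b i j
      = min (cum a (i+1)) (cum b q) - min (cum a i) (cum b q) := by
  have : ∀ j, NWP a b i j =
      (fun j => min (cum a (i+1)) (cum b j) - min (cum a i) (cum b j)) (j+1)
      - (fun j => min (cum a (i+1)) (cum b j) - min (cum a i) (cum b j)) j := by
    intro j; simp only [NWP]; ring
  rw [sum_congr rfl fun j _ => this j, sum_range_sub (fun j => min (cum a (i+1)) (cum b j) - min (cum a i) (cum b j))]
  simp [cum_zero, min_eq_right (cum_nonneg ha i), min_eq_right (cum_nonneg ha (i+1))]

lemma NWP_double {a b : ℕ → ℝ} (ha : ∀ i, 0 ≤ a i) (hb : ∀ j, 0 ≤ b j) (p q : ℕ) :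
    ∑ i ∈ range p, ∑ j ∈ range q, NWP a b i j = min (cum a p) (cum b q) := by
  rw [sum_congr rfl fun i _ => NWP_inner ha hb i q, sum_range_sub (fun i => min (cum a i) (cum b q))]
  simp [cum_zero, min_eq_left (cum_nonneg hb q)]

lemma sum_ind_lt {h : ℕ → ℝ} {p n : ℕ} (hp : p ≤ n) :
    ∑ i ∈ range n, ind (i < p) * h i = ∑ i ∈ range p, h i :=
  calc ∑ i ∈ range n, ind (i < p) * h i
      = ∑ i ∈ range p, ind (i < p) * h i :=
        (sum_subset (range_subset_range.mpr hp) (fun i _ hi => by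
          have : ¬ i < p := fun hc => hi (mem_range.mpr hc)
          simp [ind, this])).symm
    _ = ∑ i ∈ range p, h i := sum_congr rfl fun i hi => by simp [ind, mem_range.mp hi]

lemma NWP_row {a b : ℕ → ℝ} (ha : ∀ i, 0 ≤ a i) (hb : ∀ j, 0 ≤ b j) {m : ℕ}
    (hbm : cum b m = 1) (hale : ∀ k, cum a k ≤ 1) (i : ℕ) :
    ∑ j ∈ range m, NWP a b i j = a i := by
  rw [NWP_inner ha hb, hbm, min_eq_left (hale (i+1)), min_eq_left (hale i), cum_succ]
  ring

lemma NWP_threshold {a b : ℕ → ℝ} (ha : ∀ i, 0 ≤ a i) (hb : ∀ j, 0 ≤ b j)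
    {n m p q : ℕ} (hp : p ≤ n) (hq : q ≤ m)
    (han : cum a n = 1) (hbm : cum b m = 1)
    (hale : ∀ k, cum a k ≤ 1) (hble : ∀ k, cum b k ≤ 1) :
    ∑ i ∈ range n, ∑ j ∈ range m, NWP a b i j * |ind (i < p) - ind (j < q)|
      = |cum a p - cum b q| := by
  have expand : ∀ i j, NWP a b i j * |ind (i < p) - ind (j < q)|
      = ind (i < p) * NWP a b i j + ind (j < q) * NWP a b i j
        - 2 * (ind (i < p) * (ind (j < q) * NWP a b i j)) := by
    intro i j; rw [abs_ind_sub]; ring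
  have inner : ∀ i, ∑ j ∈ range m, NWP a b i j * |ind (i < p) - ind (j < q)|
      = ind (i < p) * a i + ∑ j ∈ range q, NWP a b i j
        - 2 * (ind (i < p) * ∑ j ∈ range q, NWP a b i j) := by
    intro i
    rw [sum_congr rfl fun j _ => expand i j]
    rw [sum_sub_distrib, sum_add_distrib, ← mul_sum, ← mul_sum, ← mul_sum]
    rw [NWP_row ha hb hbm hale, sum_ind_lt hq]
  rw [sum_congr rfl fun i _ => inner i]
  rw [sum_sub_distrib, sum_add_distrib, ← mul_sum]
  rw [sum_ind_lt hp, sum_ind_lt hp, NWP_double ha hb, NWP_double ha hb, han,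
    min_eq_right (hble q)]
  have hcp : ∑ x ∈ range p, a x = cum a p := rfl
  rw [hcp]
  rcases le_total (cum a p) (cum b q) with h | h
  · rw [min_eq_left h, abs_of_nonpos (by linarith)]; ring
  · rw [min_eq_right h, abs_of_nonneg (by linarith)]; ring

lemma NWP_col {a b : ℕ → ℝ} (ha : ∀ i, 0 ≤ a i) (hb : ∀ j, 0 ≤ b j) {n : ℕ}
    (han : cum a n = 1) (hble : ∀ k, cum b k ≤ 1) (j : ℕ) :
    ∑ i ∈ range n, NWP a b i j = b j := by
  have key : ∀ i, NWP a b i j =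
      (fun i => min (cum a i) (cum b (j+1)) - min (cum a i) (cum b j)) (i+1)
      - (fun i => min (cum a i) (cum b (j+1)) - min (cum a i) (cum b j)) i := by
    intro i; simp only [NWP]; ring
  rw [sum_congr rfl fun i _ => key i,
    sum_range_sub (fun i => min (cum a i) (cum b (j+1)) - min (cum a i) (cum b j)), han]
  rw [min_eq_right (hble (j+1)), min_eq_right (hble j)]
  have h0 : cum a 0 = 0 := cum_zero a
  rw [h0, min_eq_left (cum_nonneg hb (j+1)), min_eq_left (cum_nonneg hb j), cum_succ]
  ring

noncomputable def extv {n : ℕ} (a : Fin n → ℝ) : ℕ → ℝ :=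
  fun i => if h : i < n then a ⟨i, h⟩ else 0

lemma extv_coe {n : ℕ} (a : Fin n → ℝ) (i : Fin n) : extv a (i : ℕ) = a i := by
  simp [extv, i.isLt]

lemma extv_nonneg {n : ℕ} {a : Fin n → ℝ} (ha : ∀ i, 0 ≤ a i) (i : ℕ) : 0 ≤ extv a i := by
  unfold extv; split_ifs with h
  · exact ha _
  · exact le_refl _

lemma cum_extv {n : ℕ} (a : Fin n → ℝ) : cum (extv a) n = ∑ i, a i := by
  rw [cum, ← Fin.sum_univ_eq_sum_range (extv a) n]
  exact sum_congr rfl fun i _ => extv_coe a i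

lemma cum_extv_ge {n : ℕ} (a : Fin n → ℝ) {k : ℕ} (hk : n ≤ k) :
    cum (extv a) k = ∑ i, a i := by
  rw [← cum_extv a, cum, cum, ← sum_subset (range_subset_range.mpr hk)]
  intro i _ hi
  have : ¬ i < n := fun hc => hi (mem_range.mpr hc)
  simp [extv, this]

lemma cum_extv_le_one {n : ℕ} {a : Fin n → ℝ} (ha : ∀ i, 0 ≤ a i) (hs : ∑ i, a i = 1)
    (k : ℕ) : cum (extv a) k ≤ 1 := by
  rcases le_total k n with h | h
  · calc cum (extv a) k ≤ cum (extv a) n := cum_mono (extv_nonneg ha) h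
      _ = 1 := by rw [cum_extv, hs]
  · rw [cum_extv_ge a h, hs]

lemma monotone_threshold {n : ℕ} {f : Fin n → ℝ} (hf : Monotone f) (t : ℝ) :
    ∃ p ≤ n, ∀ i : Fin n, (f i ≤ t ↔ (i : ℕ) < p) := by
  classical
  refine ⟨(univ.filter (fun i => f i ≤ t)).card,
    le_trans (card_filter_le _ _) (by simp), fun i => ?_⟩
  constructor
  · intro hi
    have hsub : Finset.Iic i ⊆ univ.filter (fun i => f i ≤ t) := by
      intro j hj
      simp only [mem_filter, mem_univ, true_and]
      exact le_trans (hf (mem_Iic.mp hj)) hi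
    have := card_le_card hsub
    rw [Fin.card_Iic] at this
    omega
  · intro hi
    by_contra hc
    have hsub : univ.filter (fun i => f i ≤ t) ⊆ Finset.Iio i := by
      intro j hj
      simp only [mem_filter, mem_univ, true_and] at hj
      rw [mem_Iio]
      by_contra hji
      exact hc (le_trans (hf (not_lt.mp hji)) hj)
    have := card_le_card hsub
    rw [Fin.card_Iio] at this
    omega

lemma exists_good_coupling {n m : ℕ} (a : Fin n → ℝ) (b : Fin m → ℝ)
    (x : Fin n → ℝ) (y : Fin m → ℝ) (ha : IsProbVec a) (hb : IsProbVec b) :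
    ∃ P ∈ transportPolytope a b, ∀ t : ℝ,
      ∑ i, ∑ j, P i j * |ind (x i ≤ t) - ind (y j ≤ t)|
        = |(∑ i, a i * ind (x i ≤ t)) - (∑ j, b j * ind (y j ≤ t))| := by
  classical
  obtain ⟨ha0, ha1⟩ := ha
  obtain ⟨hb0, hb1⟩ := hb
  set σ := Tuple.sort x with hσ
  set τ := Tuple.sort y with hτ
  set A : ℕ → ℝ := extv (a ∘ σ) with hA
  set B : ℕ → ℝ := extv (b ∘ τ) with hB
  have hA0 : ∀ i, 0 ≤ A i := extv_nonneg (fun i => ha0 _)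
  have hB0 : ∀ j, 0 ≤ B j := extv_nonneg (fun j => hb0 _)
  have haσ : ∑ i, (a ∘ σ) i = 1 := (Equiv.sum_comp σ a).trans ha1
  have hbτ : ∑ j, (b ∘ τ) j = 1 := (Equiv.sum_comp τ b).trans hb1
  have hAn : cum A n = 1 := by rw [hA, cum_extv]; exact haσ
  have hBm : cum B m = 1 := by rw [hB, cum_extv]; exact hbτ
  have hAle : ∀ k, cum A k ≤ 1 := cum_extv_le_one (fun i => ha0 _) haσ
  have hBle : ∀ k, cum B k ≤ 1 := cum_extv_le_one (fun j => hb0 _) hbτ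
  refine ⟨fun i j => NWP A B ((σ.symm i : Fin n) : ℕ) ((τ.symm j : Fin m) : ℕ),
    ⟨fun i j => NWP_nonneg hA0 hB0 _ _, fun i => ?_, fun j => ?_⟩, fun t => ?_⟩
  · -- row marginal
    rw [Equiv.sum_comp τ.symm
      (fun j : Fin m => NWP A B ((σ.symm i : Fin n) : ℕ) (j : ℕ))]
    rw [Fin.sum_univ_eq_sum_range (fun j => NWP A B ((σ.symm i : Fin n) : ℕ) j) m]
    rw [NWP_row hA0 hB0 hBm hAle]
    rw [hA, extv_coe (a ∘ σ) (σ.symm i)]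
    simp
  · -- column marginal
    rw [Equiv.sum_comp σ.symm
      (fun i : Fin n => NWP A B (i : ℕ) ((τ.symm j : Fin m) : ℕ))]
    rw [Fin.sum_univ_eq_sum_range (fun i => NWP A B i ((τ.symm j : Fin m) : ℕ)) n]
    rw [NWP_col hA0 hB0 hAn hBle]
    rw [hB, extv_coe (b ∘ τ) (τ.symm j)]
    simp
  · -- threshold identity
    obtain ⟨p, hpn, hxp⟩ := monotone_threshold (Tuple.monotone_sort x) t
    obtain ⟨q, hqm, hyq⟩ := monotone_threshold (Tuple.monotone_sort y) t
    have hxp' : ∀ i : Fin n, (x (σ i) ≤ t ↔ (i : ℕ) < p) := hxp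
    have hyq' : ∀ j : Fin m, (y (τ j) ≤ t ↔ (j : ℕ) < q) := hyq
    have hL : ∑ i, ∑ j, NWP A B ((σ.symm i : Fin n) : ℕ) ((τ.symm j : Fin m) : ℕ)
          * |ind (x i ≤ t) - ind (y j ≤ t)|
        = |cum A p - cum B q| := by
      rw [← Equiv.sum_comp σ (fun i : Fin n =>
        ∑ j, NWP A B ((σ.symm i : Fin n) : ℕ) ((τ.symm j : Fin m) : ℕ)
          * |ind (x i ≤ t) - ind (y j ≤ t)|)]
      have inner : ∀ i : Fin n,
          (∑ j, NWP A B ((σ.symm (σ i) : Fin n) : ℕ) ((τ.symm j : Fin m) : ℕ)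
            * |ind (x (σ i) ≤ t) - ind (y j ≤ t)|)
          = ∑ j ∈ range m, NWP A B (i : ℕ) j * |ind ((i:ℕ) < p) - ind (j < q)| := by
        intro i
        rw [← Equiv.sum_comp τ (fun j : Fin m =>
          NWP A B ((σ.symm (σ i) : Fin n) : ℕ) ((τ.symm j : Fin m) : ℕ)
            * |ind (x (σ i) ≤ t) - ind (y j ≤ t)|)]
        rw [← Fin.sum_univ_eq_sum_range
          (fun j => NWP A B (i : ℕ) j * |ind ((i:ℕ) < p) - ind (j < q)|) m]
        refine sum_congr rfl fun j _ => ?_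
        rw [Equiv.symm_apply_apply, Equiv.symm_apply_apply]
        rw [ind_congr (hxp' i), ind_congr (hyq' j)]
      rw [sum_congr rfl fun i _ => inner i]
      rw [Fin.sum_univ_eq_sum_range
        (fun i => ∑ j ∈ range m, NWP A B i j * |ind (i < p) - ind (j < q)|) n]
      exact NWP_threshold hA0 hB0 hpn hqm hAn hBm hAle hBle
    have hF : ∑ i, a i * ind (x i ≤ t) = cum A p := by
      rw [← Equiv.sum_comp σ (fun i : Fin n => a i * ind (x i ≤ t))]
      show ∑ i : Fin n, a (σ i) * ind (x (σ i) ≤ t) = ∑ i ∈ range p, A i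
      rw [← sum_ind_lt hpn, ← Fin.sum_univ_eq_sum_range (fun i => ind (i < p) * A i) n]
      refine sum_congr rfl fun i _ => ?_
      rw [ind_congr (hxp' i), mul_comm]
      congr 1
      exact (extv_coe (a ∘ σ) i).symm
    have hG : ∑ j, b j * ind (y j ≤ t) = cum B q := by
      rw [← Equiv.sum_comp τ (fun j : Fin m => b j * ind (y j ≤ t))]
      show ∑ j : Fin m, b (τ j) * ind (y (τ j) ≤ t) = ∑ j ∈ range q, B j
      rw [← sum_ind_lt hqm, ← Fin.sum_univ_eq_sum_range (fun j => ind (j < q) * B j) m]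
      refine sum_congr rfl fun j _ => ?_
      rw [ind_congr (hyq' j), mul_comm]
      congr 1
      exact (extv_coe (b ∘ τ) j).symm
    rw [hL, hF, hG]

noncomputable def ev (T : Finset ℝ) (k : ℕ) : ℝ :=
  if h : k < T.card then T.orderEmbOfFin rfl ⟨k, h⟩ else 0

lemma ev_strict {T : Finset ℝ} {k l : ℕ} (hkl : k < l) (hl : l < T.card) :
    ev T k < ev T l := by
  rw [ev, ev, dif_pos hl, dif_pos (lt_trans hkl hl)]
  exact (T.orderEmbOfFin rfl).strictMono (show (⟨k, lt_trans hkl hl⟩ : Fin T.card) < ⟨l, hl⟩ from hkl)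

lemma ev_mono {T : Finset ℝ} {k l : ℕ} (hkl : k ≤ l) (hl : l < T.card) :
    ev T k ≤ ev T l := by
  rcases eq_or_lt_of_le hkl with rfl | h
  · exact le_refl _
  · exact le_of_lt (ev_strict h hl)

lemma ev_surj {T : Finset ℝ} {w : ℝ} (hw : w ∈ T) :
    ∃ k, ∃ _ : k < T.card, ev T k = w := by
  have : w ∈ Set.range (T.orderEmbOfFin rfl) := by
    rw [Finset.range_orderEmbOfFin]; exact hw
  obtain ⟨⟨k, hk⟩, hkw⟩ := this
  exact ⟨k, hk, by rw [ev, dif_pos hk]; exact hkw⟩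

lemma phi_sum {T : Finset ℝ} {w : ℝ} (hw : w ∈ T) :
    ∑ k ∈ range (T.card - 1), (ev T (k+1) - ev T k) * ind (w ≤ ev T k)
      = ev T (T.card - 1) - w := by
  obtain ⟨k₀, hk₀, rfl⟩ := ev_surj hw
  have hcard : 1 ≤ T.card := by omega
  have key : ∀ k ∈ range (T.card - 1),
      (ev T (k+1) - ev T k) * ind (ev T k₀ ≤ ev T k)
        = (if k₀ ≤ k then (fun j => ev T j) (k+1) - ev T k else 0) := by
    intro k hk
    have hk' : k < T.card - 1 := mem_range.mp hk
    have hkc : k < T.card := by omega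
    have : (ev T k₀ ≤ ev T k) ↔ (k₀ ≤ k) := by
      constructor
      · intro h
        by_contra hc
        exact absurd (ev_strict (not_le.mp hc) hk₀) (not_lt.mpr h)
      · intro h; exact ev_mono h hkc
    rw [ind_congr this, ind]
    split_ifs <;> simp
  rw [sum_congr rfl key]
  rw [← sum_subset (s₁ := Ico k₀ (T.card - 1)) (fun k hk => mem_range.mpr (mem_Ico.mp hk).2)
    (fun k hk hk2 => by
      have : ¬ k₀ ≤ k := fun hc => hk2 (mem_Ico.mpr ⟨hc, mem_range.mp hk⟩)
      simp [this])]
  rw [sum_congr rfl (fun k hk => if_pos (mem_Ico.mp hk).1)]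
  rw [Finset.sum_Ico_eq_sub _ (by omega : k₀ ≤ T.card - 1)]
  rw [sum_range_sub (fun k => ev T k), sum_range_sub (fun k => ev T k)]
  ring

lemma abs_ind_mono {u w v : ℝ} (huw : u ≤ w) :
    |ind (u ≤ v) - ind (w ≤ v)| = ind (u ≤ v) - ind (w ≤ v) := by
  unfold ind
  split_ifs with h1 h2 h2 <;> norm_num
  exact h1 (le_trans huw h2)

lemma dist_decomp {T : Finset ℝ} {u w : ℝ} (hu : u ∈ T) (hw : w ∈ T) :
    ∑ k ∈ range (T.card - 1), (ev T (k+1) - ev T k)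
      * |ind (u ≤ ev T k) - ind (w ≤ ev T k)| = |u - w| := by
  have main : ∀ u w : ℝ, u ∈ T → w ∈ T → u ≤ w →
      ∑ k ∈ range (T.card - 1), (ev T (k+1) - ev T k)
        * |ind (u ≤ ev T k) - ind (w ≤ ev T k)| = w - u := by
    intro u w hu hw huw
    have : ∀ k ∈ range (T.card - 1), (ev T (k+1) - ev T k)
        * |ind (u ≤ ev T k) - ind (w ≤ ev T k)|
        = (ev T (k+1) - ev T k) * ind (u ≤ ev T k)
          - (ev T (k+1) - ev T k) * ind (w ≤ ev T k) := by
      intro k _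
      rw [abs_ind_mono huw]; ring
    rw [sum_congr rfl this, sum_sub_distrib, phi_sum hu, phi_sum hw]
    ring
  rcases le_total u w with h | h
  · rw [main u w hu hw h, abs_of_nonpos (by linarith)]; ring
  · have : ∀ k ∈ range (T.card - 1), (ev T (k+1) - ev T k)
        * |ind (u ≤ ev T k) - ind (w ≤ ev T k)|
        = (ev T (k+1) - ev T k) * |ind (w ≤ ev T k) - ind (u ≤ ev T k)| := by
      intro k _; rw [abs_sub_comm]
    rw [sum_congr rfl this, main w u hw hu h, abs_of_nonneg (by linarith)]

lemma abs_cnd {N : ℕ} (w : Fin N → ℝ) (c : Fin N → ℝ) (hc : ∑ r, c r = 0) :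
    ∑ r, ∑ s, c r * c s * |w r - w s| ≤ 0 := by
  classical
  rcases Nat.eq_zero_or_pos N with rfl | hN
  · simp
  set T : Finset ℝ := image w univ with hT
  have hmem : ∀ r, w r ∈ T := fun r => mem_image_of_mem _ (mem_univ r)
  have hcard : 1 ≤ T.card := card_pos.mpr ⟨w ⟨0, hN⟩, hmem _⟩
  have step1 : ∀ r s : Fin N, c r * c s * |w r - w s|
      = ∑ k ∈ range (T.card - 1), (ev T (k+1) - ev T k)
          * (c r * c s * |ind (w r ≤ ev T k) - ind (w s ≤ ev T k)|) := by
    intro r s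
    rw [← dist_decomp (hmem r) (hmem s), mul_sum]
    exact sum_congr rfl fun k _ => by ring
  rw [sum_congr rfl fun r _ => sum_congr rfl fun s _ => step1 r s]
  have swap : ∑ r : Fin N, ∑ s : Fin N, ∑ k ∈ range (T.card - 1),
        (ev T (k+1) - ev T k) * (c r * c s * |ind (w r ≤ ev T k) - ind (w s ≤ ev T k)|)
      = ∑ k ∈ range (T.card - 1), ∑ r : Fin N, ∑ s : Fin N,
        (ev T (k+1) - ev T k) * (c r * c s * |ind (w r ≤ ev T k) - ind (w s ≤ ev T k)|) :=
    (sum_congr rfl fun r _ => sum_comm).trans sum_comm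
  rw [swap]
  refine sum_nonpos fun k hk => ?_
  have hk1 : k + 1 < T.card := by have := mem_range.mp hk; omega
  have hd : 0 ≤ ev T (k+1) - ev T k :=
    sub_nonneg.mpr (le_of_lt (ev_strict (Nat.lt_succ_self k) hk1))
  set v := ev T k with hv
  set d := ev T (k+1) - ev T k with hdd
  have pull : ∑ r, ∑ s, d * (c r * c s * |ind (w r ≤ v) - ind (w s ≤ v)|)
      = d * ∑ r, ∑ s, c r * c s * |ind (w r ≤ v) - ind (w s ≤ v)| := by
    rw [mul_sum]
    exact sum_congr rfl fun r _ => (mul_sum _ _ _).symm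
  rw [pull]
  have quad : ∑ r, ∑ s, c r * c s * |ind (w r ≤ v) - ind (w s ≤ v)|
      = -2 * (∑ r, c r * ind (w r ≤ v))^2 := by
    have expand : ∀ r s : Fin N, c r * c s * |ind (w r ≤ v) - ind (w s ≤ v)|
        = (c r * ind (w r ≤ v)) * c s + c r * (c s * ind (w s ≤ v))
          - 2 * ((c r * ind (w r ≤ v)) * (c s * ind (w s ≤ v))) := by
      intro r s; rw [abs_ind_sub]; ring
    rw [sum_congr rfl fun r _ => sum_congr rfl fun s _ => expand r s]
    have inner : ∀ r : Fin N, ∑ s, ((c r * ind (w r ≤ v)) * c s + c r * (c s * ind (w s ≤ v))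
          - 2 * ((c r * ind (w r ≤ v)) * (c s * ind (w s ≤ v))))
        = (c r * ind (w r ≤ v)) * (∑ s, c s) + c r * (∑ s, c s * ind (w s ≤ v))
          - 2 * ((c r * ind (w r ≤ v)) * (∑ s, c s * ind (w s ≤ v))) := by
      intro r
      rw [sum_sub_distrib, sum_add_distrib, ← mul_sum, ← mul_sum, ← mul_sum, ← mul_sum]
    rw [sum_congr rfl fun r _ => inner r, hc]
    set S := ∑ s, c s * ind (w s ≤ v) with hS
    have simp2 : ∀ r : Fin N, (c r * ind (w r ≤ v)) * (0:ℝ) + c r * S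
          - 2 * ((c r * ind (w r ≤ v)) * S)
        = c r * S - (2 * S) * (c r * ind (w r ≤ v)) := by
      intro r; ring
    rw [sum_congr rfl fun r _ => simp2 r, sum_sub_distrib, ← sum_mul, hc, ← mul_sum, ← hS]
    ring
  rw [quad]
  nlinarith [sq_nonneg (∑ r, c r * ind (w r ≤ v))]

theorem stmt7 (N : ℕ) (hN : 1 ≤ N)
    (n : Fin N → ℕ) (hn : ∀ r, 1 ≤ n r)
    (a : (r : Fin N) → Fin (n r) → ℝ) (ha : ∀ r, IsProbVec (a r))
    (x : (r : Fin N) → Fin (n r) → ℝ)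
    (W1 : Fin N → Fin N → ℝ)
    (hW : ∀ r s, W1 r s =
      sInf ((fun P => ∑ i, ∑ j, P i j * |x r i - x s j|) ''
        transportPolytope (a r) (a s)))
    (c : Fin N → ℝ) (hc : ∑ r, c r = 0) :
    ∑ r, ∑ s, c r * c s * W1 r s ≤ 0 := by
  classical
  set T : Finset ℝ := image (fun p : (Σ r : Fin N, Fin (n r)) => x p.1 p.2) univ with hT
  have hmemT : ∀ r i, x r i ∈ T := fun r i => mem_image_of_mem _ (mem_univ (⟨r, i⟩ : Σ r : Fin N, Fin (n r)))
  have hcard : 1 ≤ T.card :=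
    card_pos.mpr ⟨x ⟨0, hN⟩ ⟨0, hn _⟩, hmemT ⟨0, hN⟩ ⟨0, hn _⟩⟩
  have hd : ∀ k ∈ range (T.card - 1), 0 ≤ ev T (k+1) - ev T k := by
    intro k hk
    have hk1 : k + 1 < T.card := by have := mem_range.mp hk; omega
    exact sub_nonneg.mpr (le_of_lt (ev_strict (Nat.lt_succ_self k) hk1))
  have hWD : ∀ r s, W1 r s = ∑ k ∈ range (T.card - 1), (ev T (k+1) - ev T k)
      * |(∑ i, a r i * ind (x r i ≤ ev T k)) - (∑ j, a s j * ind (x s j ≤ ev T k))| := by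
    intro r s
    rw [hW r s]
    have cost_eq : ∀ P : Fin (n r) → Fin (n s) → ℝ,
        ∑ i, ∑ j, P i j * |x r i - x s j|
          = ∑ k ∈ range (T.card - 1), (ev T (k+1) - ev T k)
              * ∑ i, ∑ j, P i j * |ind (x r i ≤ ev T k) - ind (x s j ≤ ev T k)| := by
      intro P
      have hcost : ∀ i j, P i j * |x r i - x s j|
          = ∑ k ∈ range (T.card - 1), (ev T (k+1) - ev T k)
              * (P i j * |ind (x r i ≤ ev T k) - ind (x s j ≤ ev T k)|) := by
        intro i j
        rw [← dist_decomp (hmemT r i) (hmemT s j), mul_sum]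
        exact sum_congr rfl fun k _ => by ring
      rw [sum_congr rfl fun i _ => sum_congr rfl fun j _ => hcost i j]
      have swap : ∑ i, ∑ j, ∑ k ∈ range (T.card - 1),
            (ev T (k+1) - ev T k) * (P i j * |ind (x r i ≤ ev T k) - ind (x s j ≤ ev T k)|)
          = ∑ k ∈ range (T.card - 1), ∑ i, ∑ j,
            (ev T (k+1) - ev T k) * (P i j * |ind (x r i ≤ ev T k) - ind (x s j ≤ ev T k)|) :=
        (sum_congr rfl fun i _ => sum_comm).trans sum_comm
      rw [swap]
      refine sum_congr rfl fun k _ => ?_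
      rw [mul_sum]
      exact sum_congr rfl fun i _ => (mul_sum _ _ _).symm
    apply IsLeast.csInf_eq
    constructor
    · obtain ⟨P, hP, hPt⟩ := exists_good_coupling (a r) (a s) (x r) (x s) (ha r) (ha s)
      refine ⟨P, hP, ?_⟩
      beta_reduce
      rw [cost_eq P]
      exact sum_congr rfl fun k _ => by rw [hPt (ev T k)]
    · rintro W ⟨P, hP, rfl⟩
      obtain ⟨hP0, hProw, hPcol⟩ := hP
      beta_reduce
      rw [cost_eq P]
      refine sum_le_sum fun k hk => ?_
      refine mul_le_mul_of_nonneg_left ?_ (hd k hk)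
      set v := ev T k with hv
      have key : (∑ i, a r i * ind (x r i ≤ v)) - (∑ j, a s j * ind (x s j ≤ v))
          = ∑ i, ∑ j, P i j * (ind (x r i ≤ v) - ind (x s j ≤ v)) := by
        have inner : ∀ i, ∑ j, P i j * (ind (x r i ≤ v) - ind (x s j ≤ v))
            = a r i * ind (x r i ≤ v) - ∑ j, P i j * ind (x s j ≤ v) := by
          intro i
          rw [sum_congr rfl (fun j _ => (by ring :
              P i j * (ind (x r i ≤ v) - ind (x s j ≤ v))
                = P i j * ind (x r i ≤ v) - P i j * ind (x s j ≤ v))),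
            sum_sub_distrib, ← sum_mul, hProw i]
        rw [sum_congr rfl fun i _ => inner i, sum_sub_distrib]
        congr 1
        rw [sum_comm]
        exact (sum_congr rfl fun j _ => by rw [← sum_mul, hPcol j]).symm
      calc |(∑ i, a r i * ind (x r i ≤ v)) - (∑ j, a s j * ind (x s j ≤ v))|
          = |∑ i, ∑ j, P i j * (ind (x r i ≤ v) - ind (x s j ≤ v))| := by rw [key]
        _ ≤ ∑ i, |∑ j, P i j * (ind (x r i ≤ v) - ind (x s j ≤ v))| :=
            abs_sum_le_sum_abs _ _
        _ ≤ ∑ i, ∑ j, |P i j * (ind (x r i ≤ v) - ind (x s j ≤ v))| :=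
            sum_le_sum fun i _ => abs_sum_le_sum_abs _ _
        _ = ∑ i, ∑ j, P i j * |ind (x r i ≤ v) - ind (x s j ≤ v)| :=
            sum_congr rfl fun i _ => sum_congr rfl fun j _ => by
              rw [abs_mul, abs_of_nonneg (hP0 i j)]
  have step : ∀ r s, c r * c s * W1 r s
      = ∑ k ∈ range (T.card - 1), (ev T (k+1) - ev T k)
          * (c r * c s * |(∑ i, a r i * ind (x r i ≤ ev T k))
              - (∑ j, a s j * ind (x s j ≤ ev T k))|) := by
    intro r s
    rw [hWD r s, mul_sum]
    exact sum_congr rfl fun k _ => by ring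
  rw [sum_congr rfl fun r _ => sum_congr rfl fun s _ => step r s]
  have swap : ∑ r, ∑ s, ∑ k ∈ range (T.card - 1), (ev T (k+1) - ev T k)
        * (c r * c s * |(∑ i, a r i * ind (x r i ≤ ev T k))
            - (∑ j, a s j * ind (x s j ≤ ev T k))|)
      = ∑ k ∈ range (T.card - 1), ∑ r, ∑ s, (ev T (k+1) - ev T k)
        * (c r * c s * |(∑ i, a r i * ind (x r i ≤ ev T k))
            - (∑ j, a s j * ind (x s j ≤ ev T k))|) :=
    (sum_congr rfl fun r _ => sum_comm).trans sum_comm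
  rw [swap]
  refine sum_nonpos fun k hk => ?_
  have pull : ∑ r, ∑ s, (ev T (k+1) - ev T k)
        * (c r * c s * |(∑ i, a r i * ind (x r i ≤ ev T k))
            - (∑ j, a s j * ind (x s j ≤ ev T k))|)
      = (ev T (k+1) - ev T k) * ∑ r, ∑ s, c r * c s
          * |(∑ i, a r i * ind (x r i ≤ ev T k))
              - (∑ j, a s j * ind (x s j ≤ ev T k))| := by
    rw [mul_sum]
    exact sum_congr rfl fun r _ => (mul_sum _ _ _).symm
  rw [pull]
  exact mul_nonpos_iff.mpr (Or.inl ⟨hd k hk,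
    abs_cnd (fun r => ∑ i, a r i * ind (x r i ≤ ev T k)) c hc⟩)
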